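/- Let $k$ be a field, let $N \geq 0$, and let $\varphi$ be a homogeneous polynomial of degree $3$ in $N+1$ variables over $k$. Let $f \in k[t]$ be an irreducible polynomial of degree $4$, and set $K := k[t]/(f)$, a simple extension of $k$ of degree $4$. If $\varphi$ is isotropic over $K$, then there exists a finite field extension $L/k$ with $[L:k] \in \{1,5\}$ such that $\varphi$ is isotropic over $L$. -/

import Mathlib

open Polynomial

namespace CubicDegFourAux

variable {k : Type} [Field k]

/-- Coefficient of a product at the sum of degree bounds. -/
lemma coeff_prod_bound {R : Type*} [CommSemiring R] {ι : Type*} (s : Finset ι)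
    (f : ι → R[X]) (b : ι → ℕ) (h : ∀ i ∈ s, (f i).natDegree ≤ b i) :
    (∏ i ∈ s, f i).natDegree ≤ ∑ i ∈ s, b i ∧
      (∏ i ∈ s, f i).coeff (∑ i ∈ s, b i) = ∏ i ∈ s, (f i).coeff (b i) := by
  classical
  induction s using Finset.induction_on with
  | empty => simp
  | @insert a s ha ih =>
    have h' : ∀ i ∈ s, (f i).natDegree ≤ b i := fun i hi => h i (Finset.mem_insert_of_mem hi)
    obtain ⟨ih1, ih2⟩ := ih h'
    rw [Finset.prod_insert ha, Finset.prod_insert ha, Finset.sum_insert ha]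
    constructor
    · exact natDegree_mul_le.trans (add_le_add (h a (Finset.mem_insert_self a s)) ih1)
    · rw [coeff_mul_add_eq_of_natDegree_le (h a (Finset.mem_insert_self a s)) ih1, ih2]

/-- Top coefficient of a homogeneous polynomial evaluated at polynomials. -/
lemma coeff_aeval_top {n d m : ℕ} (φ : MvPolynomial (Fin n) k)
    (hφ : φ.IsHomogeneous d) (u : Fin n → k[X]) (hu : ∀ i, (u i).natDegree ≤ m) :
    (MvPolynomial.aeval u φ).natDegree ≤ d * m ∧
      (MvPolynomial.aeval u φ).coeff (d * m) =
        MvPolynomial.eval (fun i => (u i).coeff m) φ := by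
  rw [MvPolynomial.aeval_def, MvPolynomial.eval₂_eq, MvPolynomial.eval_eq]
  have key : ∀ α ∈ φ.support,
      (∏ i ∈ α.support, u i ^ α i).natDegree ≤ d * m ∧
        (∏ i ∈ α.support, u i ^ α i).coeff (d * m) =
          ∏ i ∈ α.support, ((u i).coeff m) ^ α i := by
    intro α hα
    have hdeg : ∑ i ∈ α.support, α i = d := by
      have h1 := hφ (MvPolynomial.mem_support_iff.mp hα)
      change (Finsupp.weight (fun _ => 1)) α = d at h1
      rw [← Finsupp.degree_eq_weight_one] at h1
      exact h1
    have hb : ∀ i ∈ α.support, (u i ^ α i).natDegree ≤ α i * m := fun i _ =>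
      natDegree_pow_le.trans (Nat.mul_le_mul_left _ (hu i))
    have hsum : ∑ i ∈ α.support, α i * m = d * m := by
      rw [← Finset.sum_mul, hdeg]
    obtain ⟨hb1, hb2⟩ := coeff_prod_bound α.support (fun i => u i ^ α i) (fun i => α i * m) hb
    rw [hsum] at hb1 hb2
    refine ⟨hb1, ?_⟩
    rw [hb2]
    exact Finset.prod_congr rfl fun i _ => coeff_pow_of_natDegree_le (hu i)
  constructor
  · refine natDegree_sum_le_of_forall_le _ _ fun α hα => ?_
    refine natDegree_mul_le.trans ?_
    have : (algebraMap k k[X]) (MvPolynomial.coeff α φ) = C (MvPolynomial.coeff α φ) := rfl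
    rw [this]
    simpa using (key α hα).1
  · rw [finset_sum_coeff]
    refine Finset.sum_congr rfl fun α hα => ?_
    have : (algebraMap k k[X]) (MvPolynomial.coeff α φ) = C (MvPolynomial.coeff α φ) := rfl
    rw [this, coeff_C_mul, (key α hα).2]

/-- Scaling a homogeneous polynomial's arguments. -/
lemma aeval_mul_scale {n d : ℕ} (φ : MvPolynomial (Fin n) k)
    (hφ : φ.IsHomogeneous d) (g : k[X]) (u : Fin n → k[X]) :
    MvPolynomial.aeval (fun i => g * u i) φ = g ^ d * MvPolynomial.aeval u φ := by
  rw [MvPolynomial.aeval_def, MvPolynomial.aeval_def, MvPolynomial.eval₂_eq,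
    MvPolynomial.eval₂_eq, Finset.mul_sum]
  refine Finset.sum_congr rfl fun α hα => ?_
  have hdeg : ∑ i ∈ α.support, α i = d := by
    have h1 := hφ (MvPolynomial.mem_support_iff.mp hα)
    change (Finsupp.weight (fun _ => 1)) α = d at h1
    rw [← Finsupp.degree_eq_weight_one] at h1
    exact h1
  have : ∏ i ∈ α.support, (g * u i) ^ α i =
      g ^ d * ∏ i ∈ α.support, u i ^ α i := by
    simp_rw [mul_pow]
    rw [Finset.prod_mul_distrib, Finset.prod_pow_eq_pow_sum, hdeg]
  rw [this]; ring

/-- Composition of aeval's. -/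
lemma aeval_comp {n : ℕ} {A : Type} [CommRing A] [Algebra k A] (θ : A)
    (u : Fin n → k[X]) (φ : MvPolynomial (Fin n) k) :
    Polynomial.aeval θ (MvPolynomial.aeval u φ) =
      MvPolynomial.eval (fun i => Polynomial.aeval θ (u i))
        (MvPolynomial.map (algebraMap k A) φ) := by
  have h := MvPolynomial.comp_aeval_apply (R := k) (f := u)
    (Polynomial.aeval θ : k[X] →ₐ[k] A) φ
  rw [h, MvPolynomial.aeval_def, MvPolynomial.eval_map]

/-- Isotropy over `AdjoinRoot r` from divisibility. -/
lemma isotropic_adjoinRoot {n : ℕ} (φ : MvPolynomial (Fin n) k) (u : Fin n → k[X])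
    (r : k[X]) (hdvd : r ∣ MvPolynomial.aeval u φ) (hnotall : ∃ i, ¬ r ∣ u i) :
    ∃ w : Fin n → AdjoinRoot r, w ≠ 0 ∧
      MvPolynomial.eval w (MvPolynomial.map (algebraMap k (AdjoinRoot r)) φ) = 0 := by
  refine ⟨fun i => AdjoinRoot.mk r (u i), ?_, ?_⟩
  · obtain ⟨i, hi⟩ := hnotall
    intro h0
    exact hi (AdjoinRoot.mk_eq_zero.mp (congrFun h0 i))
  · have hcomp := aeval_comp (AdjoinRoot.root r) u φ
    rw [AdjoinRoot.aeval_eq] at hcomp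
    have : (fun i => Polynomial.aeval (AdjoinRoot.root r) (u i)) =
        fun i => AdjoinRoot.mk r (u i) := funext fun i => AdjoinRoot.aeval_eq (u i)
    rw [this] at hcomp
    rw [← hcomp, AdjoinRoot.mk_eq_zero]
    exact hdvd

/-- A nontrivial zero over `k` from a root of the evaluation. -/
lemma kzero_of_root {n : ℕ} (φ : MvPolynomial (Fin n) k) (u : Fin n → k[X])
    (hcop : ∀ r : k[X], (∀ i, r ∣ u i) → IsUnit r) (c : k)
    (hroot : Polynomial.eval c (MvPolynomial.aeval u φ) = 0) :
    ∃ w : Fin n → k, w ≠ 0 ∧ MvPolynomial.eval w φ = 0 := by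
  refine ⟨fun i => Polynomial.eval c (u i), ?_, ?_⟩
  · intro h0
    have hunit : IsUnit (X - C c) :=
      hcop _ fun i => dvd_iff_isRoot.mpr (congrFun h0 i)
    have := natDegree_eq_zero_of_isUnit hunit
    simp at this
  · have hcomp := aeval_comp (A := k) c u φ
    have h1 : Polynomial.aeval c (MvPolynomial.aeval u φ)
        = Polynomial.eval c (MvPolynomial.aeval u φ) := by
      exact congrFun (Polynomial.coe_aeval_eq_eval c) _
    have h2 : (fun i => Polynomial.aeval c (u i)) = fun i => Polynomial.eval c (u i) := by
      funext i; exact congrFun (Polynomial.coe_aeval_eq_eval c) _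
    have h3 : MvPolynomial.map (algebraMap k k) φ = φ := by
      have : algebraMap k k = RingHom.id k := Algebra.algebraMap_self
      rw [this, MvPolynomial.map_id]
    rw [h1, h2, h3] at hcomp
    rw [← hcomp, hroot]

/-- Every polynomial of degree 1 has a root. -/
lemma root_of_linear (r : k[X]) (h1 : r.natDegree = 1) : ∃ c : k, r.eval c = 0 := by
  have hr0 : r ≠ 0 := fun h => by simp [h] at h1
  obtain ⟨c, hc⟩ := exists_root_of_degree_eq_one (p := r)
    (by rw [degree_eq_natDegree hr0, h1]; rfl)
  exact ⟨c, hc⟩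

/-- The main engine: from an isotropic vector over `AdjoinRoot p`, either a nontrivial
zero over `k`, or a coprime polynomial parametrization whose value is `p * q` with
controlled degrees. -/
lemma engine {n : ℕ} (φ : MvPolynomial (Fin (n + 1)) k) (hφ : φ.IsHomogeneous 3)
    (p : k[X]) (hp : Irreducible p)
    (hiso : ∃ w : Fin (n + 1) → AdjoinRoot p, w ≠ 0 ∧
      MvPolynomial.eval w (MvPolynomial.map (algebraMap k (AdjoinRoot p)) φ) = 0) :
    (∃ w : Fin (n + 1) → k, w ≠ 0 ∧ MvPolynomial.eval w φ = 0) ∨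
    ∃ (u : Fin (n + 1) → k[X]) (q : k[X]) (m : ℕ),
      (∀ r : k[X], (∀ i, r ∣ u i) → IsUnit r) ∧
      MvPolynomial.aeval u φ = p * q ∧ q ≠ 0 ∧
      q.natDegree + p.natDegree = 3 * m ∧ m + 1 ≤ p.natDegree := by
  classical
  obtain ⟨w, hw0, hweval⟩ := hiso
  have hD1 : 1 ≤ p.natDegree := hp.natDegree_pos
  set P : k[X] := p * C (p.leadingCoeff)⁻¹ with hP_def
  have hP : P.Monic := monic_mul_leadingCoeff_inv hp.ne_zero
  -- representatives of degree < deg p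
  have hx : ∀ i, ∃ x : k[X], AdjoinRoot.mk p x = w i := fun i => AdjoinRoot.mk_surjective (w i)
  choose x hxw using hx
  set v : Fin (n + 1) → k[X] := fun i => x i %ₘ P with hv_def
  have hpdvdP : p ∣ P := Dvd.intro _ rfl
  have hmkv : ∀ i, AdjoinRoot.mk p (v i) = w i := by
    intro i
    have hsplit : v i + P * (x i /ₘ P) = x i := modByMonic_add_div (x i) P
    have : AdjoinRoot.mk p (v i) + AdjoinRoot.mk p (P * (x i /ₘ P)) = AdjoinRoot.mk p (x i) := by
      rw [← map_add, hsplit]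
    rwa [(AdjoinRoot.mk_eq_zero).mpr (hpdvdP.mul_right _), add_zero, hxw i] at this
  have hdegP : P.degree = p.degree := degree_mul_leadingCoeff_inv p hp.ne_zero
  have hvdeg : ∀ i, (v i).natDegree ≤ p.natDegree - 1 := by
    intro i
    rcases eq_or_ne (v i) 0 with h | h
    · simp [h]
    · have hlt : (v i).degree < P.degree := degree_modByMonic_lt (x i) hP
      rw [hdegP] at hlt
      have := natDegree_lt_natDegree h hlt
      omega
  have hv0 : ∃ j, v j ≠ 0 := by
    by_contra hall
    push_neg at hall
    apply hw0
    funext i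
    rw [← hmkv i, hall i, map_zero, Pi.zero_apply]
  -- extract gcd
  obtain ⟨u, hu, hgu⟩ := Finset.extract_gcd v (Finset.univ_nonempty (α := Fin (n + 1)))
  have hu' : ∀ i, v i = Finset.univ.gcd v * u i := fun i => hu i (Finset.mem_univ i)
  have hg0 : Finset.univ.gcd v ≠ 0 := by
    intro h
    obtain ⟨j, hj⟩ := hv0
    exact hj (Finset.gcd_eq_zero_iff.mp h j (Finset.mem_univ j))
  have hcop : ∀ r : k[X], (∀ i, r ∣ u i) → IsUnit r := by
    intro r hr
    have : r ∣ Finset.univ.gcd u := Finset.dvd_gcd fun i _ => hr i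
    rw [hgu] at this
    exact isUnit_of_dvd_one this
  have hudeg : ∀ i, (u i).natDegree ≤ p.natDegree - 1 := by
    intro i
    rcases eq_or_ne (u i) 0 with h | h
    · simp [h]
    · have hvne : v i ≠ 0 := by rw [hu' i]; exact mul_ne_zero hg0 h
      have : (v i).natDegree = (Finset.univ.gcd v).natDegree + (u i).natDegree := by
        rw [hu' i, natDegree_mul hg0 h]
      have := hvdeg i
      omega
  set m : ℕ := Finset.univ.sup (fun i => (u i).natDegree) with hm_def
  have hum : ∀ i, (u i).natDegree ≤ m := fun i =>
    Finset.le_sup (f := fun i => (u i).natDegree) (Finset.mem_univ i)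
  have hmD : m + 1 ≤ p.natDegree := by
    have : m ≤ p.natDegree - 1 := Finset.sup_le fun i _ => hudeg i
    omega
  set h : k[X] := MvPolynomial.aeval u φ with hh_def
  obtain ⟨hdeg3m, hcoeff⟩ := coeff_aeval_top φ hφ u hum
  -- p divides h
  have hpdvdh : p ∣ h := by
    have h1 : Polynomial.aeval (AdjoinRoot.root p) (MvPolynomial.aeval v φ) = 0 := by
      rw [aeval_comp]
      have : (fun i => Polynomial.aeval (AdjoinRoot.root p) (v i)) = w := by
        funext i; rw [AdjoinRoot.aeval_eq, hmkv i]
      rw [this, hweval]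
    have h2 : MvPolynomial.aeval v φ = (Finset.univ.gcd v) ^ 3 * h := by
      conv_lhs => rw [show v = fun i => Finset.univ.gcd v * u i from funext hu']
      exact aeval_mul_scale φ hφ _ u
    rw [h2, AdjoinRoot.aeval_eq, AdjoinRoot.mk_eq_zero] at h1
    have hprime : Prime p := hp.prime
    have hpg : ¬ p ∣ Finset.univ.gcd v := by
      intro hdvd
      obtain ⟨j, hj⟩ := hv0
      have hgdvd : Finset.univ.gcd v ∣ v j := Finset.gcd_dvd (Finset.mem_univ j)
      have : p ∣ v j := hdvd.trans hgdvd
      have := natDegree_le_of_dvd this hj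
      have := hvdeg j
      omega
    rcases hprime.dvd_mul.mp h1 with hdvd | hdvd
    · exact absurd (hprime.dvd_of_dvd_pow hdvd) hpg
    · exact hdvd
  by_cases hc : h.coeff (3 * m) = 0
  · -- left branch: nontrivial zero over k
    left
    refine ⟨fun i => (u i).coeff m, ?_, ?_⟩
    · -- the top coefficient vector is nonzero
      obtain ⟨i0, -, hi0⟩ := Finset.exists_mem_eq_sup Finset.univ
        (Finset.univ_nonempty (α := Fin (n + 1))) (fun i => (u i).natDegree)
      obtain ⟨j, hj⟩ := hv0
      have huj : u j ≠ 0 := by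
        intro h0
        apply hj
        rw [hu' j, h0, mul_zero]
      intro hzero
      by_cases h0 : u i0 = 0
      · have hm0 : m = 0 := by rw [hm_def, hi0, h0, natDegree_zero]
        have hdegj : (u j).natDegree = 0 := le_antisymm (hm0 ▸ hum j) (Nat.zero_le _)
        have := Polynomial.eq_C_of_natDegree_eq_zero hdegj
        have hcj : (u j).coeff 0 ≠ 0 := by
          intro hc0
          apply huj
          rw [this, hc0, map_zero]
        exact hcj (by simpa [hm0] using congrFun hzero j)
      · have hcoeff0 : (u i0).coeff m ≠ 0 := by
          have hmeq : m = (u i0).natDegree := by rw [hm_def]; exact hi0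
          rw [hmeq, coeff_natDegree]
          exact leadingCoeff_ne_zero.mpr h0
        exact hcoeff0 (congrFun hzero i0)
    · rw [← hcoeff]; exact hc
  · -- right branch
    right
    have hh0 : h ≠ 0 := fun h0 => hc (by rw [h0, coeff_zero])
    have hdegh : h.natDegree = 3 * m :=
      le_antisymm hdeg3m (le_natDegree_of_ne_zero hc)
    obtain ⟨q, hq⟩ := hpdvdh
    have hq0 : q ≠ 0 := by
      intro h0
      apply hh0
      rw [hq, h0, mul_zero]
    refine ⟨u, q, m, hcop, hq, hq0, ?_, hmD⟩
    have : h.natDegree = p.natDegree + q.natDegree := by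
      rw [hq, natDegree_mul hp.ne_zero hq0]
    omega

/-- Quadratic descent: a cubic form isotropic over a quadratic extension is isotropic. -/
lemma quad_descent {n : ℕ} (φ : MvPolynomial (Fin (n + 1)) k) (hφ : φ.IsHomogeneous 3)
    (p : k[X]) (hp : Irreducible p) (hdeg : p.natDegree = 2)
    (hiso : ∃ w : Fin (n + 1) → AdjoinRoot p, w ≠ 0 ∧
      MvPolynomial.eval w (MvPolynomial.map (algebraMap k (AdjoinRoot p)) φ) = 0) :
    ∃ w : Fin (n + 1) → k, w ≠ 0 ∧ MvPolynomial.eval w φ = 0 := by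
  rcases engine φ hφ p hp hiso with hk | ⟨u, q, m, hcop, heq, hq0, hdim, hm⟩
  · exact hk
  · rw [hdeg] at hdim hm
    have hq1 : q.natDegree = 1 := by omega
    obtain ⟨c, hc⟩ := root_of_linear q hq1
    refine kzero_of_root φ u hcop c ?_
    rw [heq, eval_mul, hc, mul_zero]

/-- Extract an irreducible factor of degree 1, 2 or 5 from a polynomial of degree 2 or 5. -/
lemma exists_good_factor (q : k[X]) (hq0 : q ≠ 0)
    (h : q.natDegree = 2 ∨ q.natDegree = 5) :
    ∃ r : k[X], Irreducible r ∧ r ∣ q ∧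
      (r.natDegree = 1 ∨ r.natDegree = 2 ∨ r.natDegree = 5) := by
  have factor : ∀ z : k[X], z ≠ 0 → 1 ≤ z.natDegree →
      ∃ r, Irreducible r ∧ r ∣ z := by
    intro z hz0 hz1
    refine WfDvdMonoid.exists_irreducible_factor ?_ hz0
    intro hu
    have := natDegree_eq_zero_of_isUnit hu
    omega
  obtain ⟨r1, hr1, hdvd1⟩ := factor q hq0 (by omega)
  have h1 : 1 ≤ r1.natDegree := hr1.natDegree_pos
  have hle1 : r1.natDegree ≤ q.natDegree := natDegree_le_of_dvd hdvd1 hq0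
  by_cases hcase : r1.natDegree = 1 ∨ r1.natDegree = 2 ∨ r1.natDegree = 5
  · exact ⟨r1, hr1, hdvd1, hcase⟩
  · push_neg at hcase
    obtain ⟨z, hz⟩ := hdvd1
    have hz0 : z ≠ 0 := by
      rintro rfl
      rw [mul_zero] at hz
      exact hq0 hz
    have hzdeg : r1.natDegree + z.natDegree = q.natDegree := by
      rw [hz, natDegree_mul hr1.ne_zero hz0]
    have hz1 : 1 ≤ z.natDegree := by omega
    obtain ⟨r2, hr2, hdvd2⟩ := factor z hz0 hz1
    have h2 : 1 ≤ r2.natDegree := hr2.natDegree_pos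
    have hle2 : r2.natDegree ≤ z.natDegree := natDegree_le_of_dvd hdvd2 hz0
    refine ⟨r2, hr2, hdvd2.trans ⟨r1, by rw [hz]; ring⟩, by omega⟩

end CubicDegFourAux

open CubicDegFourAux Polynomial

/-- **Theorem.** Let `k` be a field and `φ` a cubic form in `N+1` variables over `k`.
If `φ` is isotropic over `K = k[t]/(f)` for some irreducible `f ∈ k[t]` of degree `4`,
then `φ` is isotropic over some finite extension `L/k` with `[L:k] ∈ {1,5}`. -/
theorem cubic_deg_four (k : Type) [Field k] (N : ℕ)
    (φ : MvPolynomial (Fin (N + 1)) k) (hφ : φ.IsHomogeneous 3)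
    (f : Polynomial k) (hf : Irreducible f) (hfdeg : f.natDegree = 4)
    (hiso : ∃ w : Fin (N + 1) → AdjoinRoot f, w ≠ 0 ∧
      MvPolynomial.eval w (MvPolynomial.map (algebraMap k (AdjoinRoot f)) φ) = 0) :
    ∃ (L : Type) (_ : Field L) (_ : Algebra k L),
      FiniteDimensional k L ∧
      (Module.finrank k L = 1 ∨ Module.finrank k L = 5) ∧
      ∃ w : Fin (N + 1) → L, w ≠ 0 ∧
        MvPolynomial.eval w (MvPolynomial.map (algebraMap k L) φ) = 0 := by
  -- helper to package a zero over `k` itself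
  have base : (∃ w : Fin (N + 1) → k, w ≠ 0 ∧ MvPolynomial.eval w φ = 0) →
      ∃ (L : Type) (_ : Field L) (_ : Algebra k L),
        FiniteDimensional k L ∧
        (Module.finrank k L = 1 ∨ Module.finrank k L = 5) ∧
        ∃ w : Fin (N + 1) → L, w ≠ 0 ∧
          MvPolynomial.eval w (MvPolynomial.map (algebraMap k L) φ) = 0 := by
    rintro ⟨w, hw0, hwe⟩
    refine ⟨k, inferInstance, inferInstance, inferInstance,
      Or.inl (Module.finrank_self k), w, hw0, ?_⟩
    have h3 : MvPolynomial.map (algebraMap k k) φ = φ := by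
      have : algebraMap k k = RingHom.id k := Algebra.algebraMap_self
      rw [this, MvPolynomial.map_id]
    rw [h3, hwe]
  rcases engine φ hφ f hf hiso with hk | ⟨u, q, m, hcop, heq, hq0, hdim, hm⟩
  · exact base hk
  · rw [hfdeg] at hdim hm
    have hq25 : q.natDegree = 2 ∨ q.natDegree = 5 := by omega
    obtain ⟨r, hr, hrdvd, hrdeg⟩ := exists_good_factor q hq0 hq25
    have hrh : r ∣ MvPolynomial.aeval u φ := by
      rw [heq]; exact hrdvd.mul_left f
    have hnotall : ∃ i, ¬ r ∣ u i := by
      by_contra hall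
      push_neg at hall
      exact hr.not_isUnit (hcop r hall)
    rcases hrdeg with h1 | h2 | h5
    · -- linear factor : zero over k
      obtain ⟨c, hc⟩ := root_of_linear r h1
      refine base (kzero_of_root φ u hcop c ?_)
      obtain ⟨z, hz⟩ := hrh
      rw [hz, eval_mul, hc, zero_mul]
    · -- quadratic factor : descend to k
      exact base (quad_descent φ hφ r hr h2 (isotropic_adjoinRoot φ u r hrh hnotall))
    · -- quintic factor : take L = AdjoinRoot r
      haveI : Fact (Irreducible r) := ⟨hr⟩
      refine ⟨AdjoinRoot r, inferInstance, inferInstance, ?_, ?_,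
        isotropic_adjoinRoot φ u r hrh hnotall⟩
      · exact (AdjoinRoot.powerBasis hr.ne_zero).finite
      · right
        rw [(AdjoinRoot.powerBasis hr.ne_zero).finrank]
        exact h5
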